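/- Let T = [[1,1],[0,1]] ∈ SL(2, ℤ) be the standard transvection (Picard–Lefschetz transformation). Then for every nonzero integer k, the power T^k is not a commutator in SL(2, ℤ); that is, there exist no A, B ∈ SL(2, ℤ) with T^k = A B A⁻¹ B⁻¹. -/
import Mathlib


/-- The standard transvection (Picard–Lefschetz transformation) in `SL(2, ℤ)`. -/
def transvection : Matrix.SpecialLinearGroup (Fin 2) ℤ :=
  ⟨!![1, 1; 0, 1], by norm_num [Matrix.det_fin_two_of]⟩

private lemma scalar_case (k a b c d p q r s : ℤ) (hk : k ≠ 0)
    (hA : a * d - b * c = 1) (hB : p * s - q * r = 1)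
    (e11 : a * p + b * r = p * a + q * c + k * (r * a + s * c))
    (e12 : a * q + b * s = p * b + q * d + k * (r * b + s * d))
    (e21 : c * p + d * r = r * a + s * c)
    (e22 : c * q + d * s = r * b + s * d) : False := by
  have h1 : k * (r * a + s * c) = 0 := by linear_combination -e11 - e22
  have h2 : r * a + s * c = 0 := by
    rcases mul_eq_zero.mp h1 with h | h
    · exact absurd h hk
    · exact h
  have h3 : c * p + d * r = 0 := by linear_combination e21 + h2
  rcases eq_or_ne c 0 with hc | hc
  · -- c = 0 case
    subst hc
    have had : a * d = 1 := by linear_combination hA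
    have hra : r * a = 0 := by linear_combination h2
    rcases Int.mul_eq_one_iff_eq_one_or_neg_one.mp had with ⟨ha, hd⟩ | ⟨ha, hd⟩ <;>
      subst ha <;> subst hd <;>
      · have hr0 : r = 0 := by omega
        subst hr0
        have hps : p * s = 1 := by linear_combination hB
        rcases Int.mul_eq_one_iff_eq_one_or_neg_one.mp hps with ⟨hp, hs⟩ | ⟨hp, hs⟩ <;>
          subst hp <;> subst hs <;> exact hk (by linarith [e12])
  · -- c ≠ 0 case
    have hs : s = a * (r * b + s * d) := by linear_combination (-s) * hA + (-b) * h2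
    have hr : r = -(c * (r * b + s * d)) := by linear_combination (-r) * hA + d * h2
    have hmm : (r * b + s * d) * (p * a + q * c) = 1 := by
      linear_combination hB - p * hs + q * hr
    set m := r * b + s * d with hmdef
    have hm2 : m * m = 1 := by
      rcases Int.eq_one_or_neg_one_of_mul_eq_one hmm with h | h <;> rw [h] <;> ring
    have hm3 : p * a + q * c = m := by
      linear_combination m * hmm - (p * a + q * c) * hm2
    have hp : p = d * m := by
      have h4 : c * (p - d * m) = 0 := by linear_combination h3 - d * hr
      have := (mul_eq_zero.mp h4).resolve_left hc
      linarith
    have hq : q = -(b * m) := by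
      have h5 : c * (q + b * m) = 0 := by linear_combination hm3 - m * hA - a * hp
      have := (mul_eq_zero.mp h5).resolve_left hc
      linarith
    have hkm : k * m = 0 := by linear_combination -e12 + (a - d) * hq + b * hs - b * hp
    rcases mul_eq_zero.mp hkm with h | h
    · exact hk h
    · rw [h] at hm2; simp at hm2

theorem transvection_pow_not_commutator :
    ∀ k : ℤ, k ≠ 0 →
      ¬ ∃ A B : Matrix.SpecialLinearGroup (Fin 2) ℤ,
          transvection ^ k = A * B * A⁻¹ * B⁻¹ := by
  intro k hk ⟨A, B, h⟩
  have hT : transvection = ModularGroup.T := by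
    ext i j; rfl
  have key : A * B = transvection ^ k * (B * A) := by rw [h]; group
  have key' : ((A * B : Matrix.SpecialLinearGroup (Fin 2) ℤ) : Matrix (Fin 2) (Fin 2) ℤ)
      = ((transvection ^ k * (B * A) : Matrix.SpecialLinearGroup (Fin 2) ℤ) :
        Matrix (Fin 2) (Fin 2) ℤ) := by rw [key]
  rw [Matrix.SpecialLinearGroup.coe_mul, Matrix.SpecialLinearGroup.coe_mul,
    Matrix.SpecialLinearGroup.coe_mul, hT, ModularGroup.coe_T_zpow] at key'
  set MA := ((A : Matrix.SpecialLinearGroup (Fin 2) ℤ) : Matrix (Fin 2) (Fin 2) ℤ)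
  set MB := ((B : Matrix.SpecialLinearGroup (Fin 2) ℤ) : Matrix (Fin 2) (Fin 2) ℤ)
  have e11 := congrFun (congrFun key' 0) 0
  have e12 := congrFun (congrFun key' 0) 1
  have e21 := congrFun (congrFun key' 1) 0
  have e22 := congrFun (congrFun key' 1) 1
  simp only [Matrix.mul_apply, Fin.sum_univ_two, Matrix.cons_val_zero, Matrix.cons_val_one,
    Matrix.head_cons, Matrix.head_fin_const, Matrix.of_apply, Matrix.cons_val',
    Matrix.empty_val', Matrix.cons_val_fin_one] at e11 e12 e21 e22
  have hdA := A.2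
  have hdB := B.2
  rw [Matrix.det_fin_two] at hdA hdB
  exact scalar_case k (MA 0 0) (MA 0 1) (MA 1 0) (MA 1 1) (MB 0 0) (MB 0 1) (MB 1 0) (MB 1 1)
    hk hdA hdB (by linear_combination e11) (by linear_combination e12) (by linear_combination e21)
    (by linear_combination e22)
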